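/- Let (u_n)_{n≥1} be a sequence of nonnegative reals such that, for some constants C > 0 and α ∈ (0, 1/2), one has u_{a+b} ≤ u_a + u_b + C (1 + a^α + b^α)(1 + u_a^{1/2} + u_b^{1/2}) for all integers a, b ≥ 1. Then u_n = O(n), i.e. there exists C' > 0 with u_n ≤ C' n for all n ≥ 1. -/

import Mathlib

open Real

set_option maxHeartbeats 1000000 in
/-- **Lemma (sub-additivity estimate).** Let `(u_n)` be a sequence of nonnegative reals such
that, for some `C > 0` and `α ∈ (0, 1/2)`,
`u_{a+b} ≤ u_a + u_b + C (1 + a^α + b^α)(1 + u_a^{1/2} + u_b^{1/2})` for all `a, b ≥ 1`.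
Then `u_n = O(n)`. -/
theorem subadditive_bound (u : ℕ → ℝ) (hu : ∀ n, 0 ≤ u n)
    (C α : ℝ) (hC : 0 < C) (hα₀ : 0 < α) (hα : α < 1 / 2)
    (hrec : ∀ a b : ℕ, 1 ≤ a → 1 ≤ b →
      u (a + b) ≤ u a + u b
        + C * (1 + (a : ℝ) ^ α + (b : ℝ) ^ α) * (1 + Real.sqrt (u a) + Real.sqrt (u b))) :
    ∃ C' > (0 : ℝ), ∀ n : ℕ, 1 ≤ n → u n ≤ C' * n := by
  obtain ⟨M, hMdef⟩ : ∃ M : ℝ, M = u 1 + 1 := ⟨_, rfl⟩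
  have hM : 1 ≤ M := by have := hu 1; linarith
  obtain ⟨γ, hγdef⟩ : ∃ γ : ℝ, γ = α / 2 + 3 / 4 := ⟨_, rfl⟩
  have hγ0 : 0 < γ := by rw [hγdef]; linarith
  have hγ1 : γ < 1 := by rw [hγdef]; linarith
  have hγ2 : α + 1 / 2 ≤ γ := by rw [hγdef]; linarith
  have h1γ : 0 < 1 - γ := by linarith
  have h4γ : (0:ℝ) < (4:ℝ) ^ γ := Real.rpow_pos_of_pos (by norm_num) _
  obtain ⟨c, hcdef⟩ : ∃ c : ℝ, c = 9 * C * (4:ℝ) ^ γ / (1 - γ) := ⟨_, rfl⟩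
  have hc : 0 < c := by rw [hcdef]; positivity
  obtain ⟨L, hLdef⟩ : ∃ L : ℝ, L = c ^ 2 * (1 + M) + 1 := ⟨_, rfl⟩
  have hL1 : 1 ≤ L := by
    have h0 : 0 ≤ c ^ 2 * (1 + M) := mul_nonneg (sq_nonneg c) (by linarith)
    rw [hLdef]; linarith
  have hL0 : 0 ≤ L := by linarith
  obtain ⟨K, hKdef⟩ : ∃ K : ℝ, K = L + M := ⟨_, rfl⟩
  have hK1 : 1 ≤ K := by rw [hKdef]; linarith
  have hK0 : 0 < K := by linarith
  have hLK : c * Real.sqrt K ≤ L := by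
    have h1 : c ^ 2 * K ≤ L ^ 2 := by
      have t1 : 0 ≤ c^4 * M := by positivity
      have t2 : 0 ≤ c^4 * M^2 := by positivity
      have t3 : 0 ≤ c^2 * M := by positivity
      rw [hKdef, hLdef]; ring_nf; nlinarith [t1, t2, t3, sq_nonneg c]
    have h2 : Real.sqrt (c ^ 2 * K) ≤ Real.sqrt (L ^ 2) := Real.sqrt_le_sqrt h1
    rwa [Real.sqrt_mul (sq_nonneg c), Real.sqrt_sq hc.le, Real.sqrt_sq hL0] at h2
  -- key claim
  have main : ∀ n : ℕ, 1 ≤ n → u n ≤ K * n - L * (n : ℝ) ^ γ := by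
    intro n
    induction n using Nat.strong_induction_on with
    | _ n ih =>
    intro hn
    rcases eq_or_lt_of_le hn with h1 | h2
    · obtain rfl : n = 1 := h1.symm
      rw [Nat.cast_one, Real.one_rpow, mul_one, mul_one, hKdef]
      linarith [hu 1]
    · have hn2 : 2 ≤ n := h2
      obtain ⟨a, hadef⟩ : ∃ a : ℕ, a = n / 2 := ⟨_, rfl⟩
      obtain ⟨b, hbdef⟩ : ∃ b : ℕ, b = n - a := ⟨_, rfl⟩
      have ha1 : 1 ≤ a := by omega
      have hab : a + b = n := by omega
      have hb1 : 1 ≤ b := by omega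
      have haleb : a ≤ b := by omega
      have iha := ih a (by omega) ha1
      have ihb := ih b (by omega) hb1
      have haR : (1:ℝ) ≤ (a:ℝ) := by exact_mod_cast ha1
      have hbR : (a:ℝ) ≤ (b:ℝ) := by exact_mod_cast haleb
      have habR : (a:ℝ) + (b:ℝ) = (n:ℝ) := by exact_mod_cast congrArg (Nat.cast : ℕ → ℝ) hab
      have hn0 : (0:ℝ) < n := by linarith
      have ha0 : (0:ℝ) < a := by linarith
      have hb0 : (0:ℝ) < b := by linarith
      have hbn : (b:ℝ) ≤ (n:ℝ) := by linarith
      have han : (a:ℝ) ≤ (n:ℝ) := by linarith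
      have hn1 : (1:ℝ) ≤ (n:ℝ) := by linarith
      have han4 : (n:ℝ)/4 ≤ (a:ℝ) := by
        have h : n ≤ 2 * a + 1 := by omega
        have h' : (n:ℝ) ≤ 2*(a:ℝ)+1 := by exact_mod_cast h
        linarith
      obtain ⟨A, hAdef⟩ : ∃ A : ℝ, A = (a:ℝ) ^ γ := ⟨_, rfl⟩
      obtain ⟨B, hBdef⟩ : ∃ B : ℝ, B = (b:ℝ) ^ γ := ⟨_, rfl⟩
      obtain ⟨P, hPdef⟩ : ∃ P : ℝ, P = (n:ℝ) ^ γ := ⟨_, rfl⟩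
      have hA0 : 0 ≤ A := hAdef ▸ Real.rpow_nonneg ha0.le _
      have hB0 : 0 ≤ B := hBdef ▸ Real.rpow_nonneg hb0.le _
      have hP0 : 0 ≤ P := hPdef ▸ Real.rpow_nonneg hn0.le _
      -- Bernoulli / concavity key inequality : P ≤ B + γ * A
      have hbne : (b:ℝ) ≠ 0 := hb0.ne'
      have key : P ≤ B + γ * A := by
        have hbern : (1 + (a:ℝ)/b) ^ γ ≤ 1 + γ * ((a:ℝ)/b) :=
          rpow_one_add_le_one_add_mul_self (by linarith [div_nonneg ha0.le hb0.le] : (-1:ℝ) ≤ (a:ℝ)/b) hγ0.le hγ1.le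
        have hbb : (b:ℝ) * ((a:ℝ)/b) = a := by field_simp
        have heq : (n:ℝ) = (b:ℝ) * (1 + (a:ℝ)/b) := by rw [mul_add, mul_one, hbb]; linarith
        have hpow : (a:ℝ) * ((b:ℝ)^(γ-1)) ≤ A := by
          have h1 : (b:ℝ)^(γ-1) ≤ (a:ℝ)^(γ-1) :=
            Real.rpow_le_rpow_of_nonpos ha0 hbR (by linarith)
          have h2 : (a:ℝ) * ((a:ℝ)^(γ-1)) = A := by
            rw [hAdef, ← Real.rpow_one_add' ha0.le (by intro hh; linarith)]
            congr 1; ring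
          calc (a:ℝ) * ((b:ℝ)^(γ-1)) ≤ (a:ℝ) * ((a:ℝ)^(γ-1)) :=
                mul_le_mul_of_nonneg_left h1 ha0.le
            _ = A := h2
        calc P = (b:ℝ)^γ * (1 + (a:ℝ)/b)^γ := by
              rw [hPdef, heq, Real.mul_rpow hb0.le (by positivity)]
          _ ≤ (b:ℝ)^γ * (1 + γ * ((a:ℝ)/b)) :=
              mul_le_mul_of_nonneg_left hbern (Real.rpow_nonneg hb0.le _)
          _ = B + γ * ((a:ℝ) * ((b:ℝ)^γ / (b:ℝ))) := by rw [hBdef]; ring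
          _ = B + γ * ((a:ℝ) * ((b:ℝ)^(γ-1))) := by
              rw [Real.rpow_sub hb0, Real.rpow_one]
          _ ≤ B + γ * A := add_le_add_right (mul_le_mul_of_nonneg_left hpow hγ0.le) B
      -- a^γ ≥ n^γ / 4^γ
      have hA4 : P ≤ A * (4:ℝ)^γ := by
        have h1 : ((n:ℝ)/4)^γ ≤ A := hAdef ▸ Real.rpow_le_rpow (by positivity) han4 hγ0.le
        rw [Real.div_rpow hn0.le (by norm_num), ← hPdef, div_le_iff₀ h4γ] at h1
        exact h1
      -- error bound
      obtain ⟨s, hsdef⟩ : ∃ s : ℝ, s = Real.sqrt K := ⟨_, rfl⟩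
      have hs1 : 1 ≤ s := by
        rw [hsdef, show (1:ℝ) = Real.sqrt 1 from Real.sqrt_one.symm]
        exact Real.sqrt_le_sqrt hK1
      have hs0 : 0 ≤ s := by linarith
      have hXa : (a:ℝ)^α ≤ (n:ℝ)^α := Real.rpow_le_rpow ha0.le han hα₀.le
      have hXb : (b:ℝ)^α ≤ (n:ℝ)^α := Real.rpow_le_rpow hb0.le hbn hα₀.le
      have hX1 : (1:ℝ) ≤ (n:ℝ)^α := by
        calc (1:ℝ) = (1:ℝ)^α := (Real.one_rpow α).symm
          _ ≤ (n:ℝ)^α := Real.rpow_le_rpow zero_le_one hn1 hα₀.le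
      have hX : 1 + (a:ℝ)^α + (b:ℝ)^α ≤ 3 * (n:ℝ)^α := by linarith
      obtain ⟨t, htdef⟩ : ∃ t : ℝ, t = Real.sqrt (n:ℝ) := ⟨_, rfl⟩
      have ht1 : 1 ≤ t := by
        rw [htdef, show (1:ℝ) = Real.sqrt 1 from Real.sqrt_one.symm]
        exact Real.sqrt_le_sqrt hn1
      have ht0 : 0 ≤ t := by linarith
      have hsqrt : ∀ m : ℕ, (m:ℝ) ≤ (n:ℝ) → u m ≤ K * m - L * (m:ℝ)^γ →
          Real.sqrt (u m) ≤ s * t := by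
        intro m hmn ihm
        have h3 : (0:ℝ) ≤ L * (m:ℝ)^γ := mul_nonneg hL0 (Real.rpow_nonneg (by positivity) _)
        have h4 : K * (m:ℝ) ≤ K * (n:ℝ) := mul_le_mul_of_nonneg_left hmn hK0.le
        have h1 : u m ≤ K * (n:ℝ) := by linarith
        calc Real.sqrt (u m) ≤ Real.sqrt (K * n) := Real.sqrt_le_sqrt h1
          _ = s * t := by rw [hsdef, htdef, Real.sqrt_mul hK0.le]
      have hYa : Real.sqrt (u a) ≤ s * t := hsqrt a han iha
      have hYb : Real.sqrt (u b) ≤ s * t := hsqrt b hbn ihb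
      have hst1 : (1:ℝ) ≤ s * t := by
        have := mul_le_mul hs1 ht1 zero_le_one hs0
        linarith
      have hY : 1 + Real.sqrt (u a) + Real.sqrt (u b) ≤ 3 * (s * t) := by linarith
      have hnt : (n:ℝ)^α * t ≤ P := by
        rw [htdef, hPdef, Real.sqrt_eq_rpow, ← Real.rpow_add hn0]
        exact Real.rpow_le_rpow_of_exponent_le hn1 hγ2
      have hE : C * (1 + (a:ℝ)^α + (b:ℝ)^α) * (1 + Real.sqrt (u a) + Real.sqrt (u b))
          ≤ 9 * C * s * P := by
        have hY0 : 0 ≤ 1 + Real.sqrt (u a) + Real.sqrt (u b) := by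
          have := Real.sqrt_nonneg (u a); have := Real.sqrt_nonneg (u b); linarith
        have e1 : C * (1 + (a:ℝ)^α + (b:ℝ)^α) * (1 + Real.sqrt (u a) + Real.sqrt (u b))
            ≤ C * (3 * (n:ℝ)^α) * (3 * (s * t)) :=
          mul_le_mul (mul_le_mul_of_nonneg_left hX hC.le) hY hY0 (by positivity)
        have e2 : C * (3 * (n:ℝ)^α) * (3 * (s * t)) = 9 * C * s * ((n:ℝ)^α * t) := by ring
        have e3 : 9 * C * s * ((n:ℝ)^α * t) ≤ 9 * C * s * P :=
          mul_le_mul_of_nonneg_left hnt (by positivity)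
        linarith
      -- constants inequality : 9*C*s*4^γ ≤ L*(1-γ)
      have hconst : 9 * C * s * (4:ℝ)^γ ≤ L * (1-γ) := by
        rw [hcdef, div_mul_eq_mul_div, div_le_iff₀ h1γ] at hLK
        rw [hsdef]
        linarith [hLK]
      -- gain inequality
      have hGain : L * P + 9 * C * s * P ≤ L * A + L * B := by
        have e1 : L * P ≤ L * (B + γ * A) := mul_le_mul_of_nonneg_left key hL0
        have e3 : 9 * C * s * P ≤ 9 * C * s * (A * (4:ℝ)^γ) :=
          mul_le_mul_of_nonneg_left hA4 (by positivity)
        have e5 : (9 * C * s * (4:ℝ)^γ) * A ≤ (L * (1-γ)) * A :=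
          mul_le_mul_of_nonneg_right hconst hA0
        have e6 : 9 * C * s * (A * (4:ℝ)^γ) = (9 * C * s * (4:ℝ)^γ) * A := by ring
        have e7 : L * (B + γ * A) = L * B + L * γ * A := by ring
        have e8 : (L * (1-γ)) * A = L * A - L * γ * A := by ring
        linarith
      have hrab := hrec a b ha1 hb1
      rw [hab] at hrab
      have hKab : K * (a:ℝ) + K * (b:ℝ) = K * (n:ℝ) := by rw [← habR]; ring
      have iha' : u a ≤ K * a - L * A := by rw [hAdef]; exact iha
      have ihb' : u b ≤ K * b - L * B := by rw [hBdef]; exact ihb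
      rw [show ((n:ℝ))^γ = P from hPdef.symm]
      calc u n ≤ u a + u b
            + C * (1 + (a:ℝ)^α + (b:ℝ)^α) * (1 + Real.sqrt (u a) + Real.sqrt (u b)) := hrab
        _ ≤ (K * a - L * A) + (K * b - L * B) + 9 * C * s * P := by linarith
        _ ≤ K * n - L * P := by linarith
  refine ⟨K, by linarith, fun n hn => ?_⟩
  have h1 := main n hn
  have h2 : (0:ℝ) ≤ L * (n:ℝ)^γ := mul_nonneg hL0 (Real.rpow_nonneg (by positivity) _)
  linarith
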